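/- arXiv:2507.20652 — 4 statements merged into one kernel-verified Lean document; each statement's English description precedes it below -/
import Mathlib

section
/- Let B₁ ∈ ℝ^{n×n} with σ_min(B₀) > ‖B₁‖. Then for every b₀, b₁ ∈ ℝⁿ, the generalized absolute value equation B₀x + b₀ + |B₁x + b₁| = 0 has a unique solution x ∈ ℝⁿ. -/
noncomputable def mApp {n : ℕ} (B : Matrix (Fin n) (Fin n) ℝ) (x : EuclideanSpace ℝ (Fin n)) :
    EuclideanSpace ℝ (Fin n) := Matrix.toEuclideanCLM (𝕜 := ℝ) B x

noncomputable def specNorm {n : ℕ} (B : Matrix (Fin n) (Fin n) ℝ) : ℝ :=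
  ‖Matrix.toEuclideanCLM (𝕜 := ℝ) B‖

noncomputable def sigmaMin {n : ℕ} (B : Matrix (Fin n) (Fin n) ℝ) : ℝ :=
  sInf {r : ℝ | ∃ v : EuclideanSpace ℝ (Fin n), ‖v‖ = 1 ∧ r = ‖mApp B v‖}

def vabs {n : ℕ} (v : EuclideanSpace ℝ (Fin n)) : EuclideanSpace ℝ (Fin n) := WithLp.toLp 2 (fun i => |v i|)

lemma vabs_lip {n : ℕ} (u w : EuclideanSpace ℝ (Fin n)) :
    ‖vabs u - vabs w‖ ≤ ‖u - w‖ := by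
  rw [EuclideanSpace.norm_eq, EuclideanSpace.norm_eq]
  apply Real.sqrt_le_sqrt
  apply Finset.sum_le_sum
  intro i _
  have h1 : ‖(vabs u - vabs w) i‖ ≤ ‖(u - w) i‖ := by
    simp only [PiLp.sub_apply, vabs, PiLp.toLp_apply, Real.norm_eq_abs]
    exact abs_abs_sub_abs_le_abs_sub _ _
  exact pow_le_pow_left₀ (norm_nonneg _) h1 2

lemma mApp_norm_le {n : ℕ} (B : Matrix (Fin n) (Fin n) ℝ) (v : EuclideanSpace ℝ (Fin n)) :
    ‖mApp B v‖ ≤ specNorm B * ‖v‖ :=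
  (Matrix.toEuclideanCLM (𝕜 := ℝ) B).le_opNorm v

lemma sigmaMin_le {n : ℕ} (B : Matrix (Fin n) (Fin n) ℝ) (v : EuclideanSpace ℝ (Fin n)) :
    sigmaMin B * ‖v‖ ≤ ‖mApp B v‖ := by
  rcases eq_or_ne v 0 with rfl | hv
  · simp [mApp]
  · have hvn : (0:ℝ) < ‖v‖ := norm_pos_iff.mpr hv
    have hbdd : BddBelow {r : ℝ | ∃ w : EuclideanSpace ℝ (Fin n), ‖w‖ = 1 ∧ r = ‖mApp B w‖} := by
      refine ⟨0, ?_⟩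
      rintro r ⟨w, -, rfl⟩
      positivity
    have hmem : ‖mApp B (‖v‖⁻¹ • v)‖ ∈
        {r : ℝ | ∃ w : EuclideanSpace ℝ (Fin n), ‖w‖ = 1 ∧ r = ‖mApp B w‖} :=
      ⟨‖v‖⁻¹ • v, norm_smul_inv_norm hv, rfl⟩
    have h1 : sigmaMin B ≤ ‖mApp B (‖v‖⁻¹ • v)‖ := csInf_le hbdd hmem
    have h2 : ‖mApp B (‖v‖⁻¹ • v)‖ = ‖v‖⁻¹ * ‖mApp B v‖ := by
      unfold mApp
      rw [map_smul, norm_smul, norm_inv, norm_norm]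
    rw [h2] at h1
    calc sigmaMin B * ‖v‖ ≤ (‖v‖⁻¹ * ‖mApp B v‖) * ‖v‖ := by nlinarith
      _ = ‖mApp B v‖ := by field_simp

theorem stmt_6 {n : ℕ} (B₀ B₁ : Matrix (Fin n) (Fin n) ℝ)
    (hσ : sigmaMin B₀ > specNorm B₁) :
    ∀ b₀ b₁ : EuclideanSpace ℝ (Fin n), ∃! x : EuclideanSpace ℝ (Fin n),
      mApp B₀ x + b₀ + vabs (mApp B₁ x + b₁) = 0 := by
  intro b₀ b₁
  have hσ0 : 0 < sigmaMin B₀ := lt_of_le_of_lt (norm_nonneg _) hσ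
  set σ := sigmaMin B₀ with hσdef
  -- injectivity of B₀
  set T : EuclideanSpace ℝ (Fin n) →ₗ[ℝ] EuclideanSpace ℝ (Fin n) :=
    (Matrix.toEuclideanCLM (𝕜 := ℝ) B₀ : EuclideanSpace ℝ (Fin n) →ₗ[ℝ] EuclideanSpace ℝ (Fin n))
    with hT
  have hTapp : ∀ x, T x = mApp B₀ x := fun x => rfl
  have hinj : Function.Injective T := by
    intro x y hxy
    have h0 : mApp B₀ (x - y) = 0 := by
      rw [← hTapp, map_sub]
      exact sub_eq_zero_of_eq hxy
    have := sigmaMin_le B₀ (x - y)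
    rw [h0, norm_zero] at this
    have : ‖x - y‖ ≤ 0 := by nlinarith
    have : x - y = 0 := by
      rw [← norm_le_zero_iff]; exact this
    linear_combination (norm := module) this
  have hsurj : Function.Surjective T := LinearMap.injective_iff_surjective.mp hinj
  let e := LinearEquiv.ofBijective T ⟨hinj, hsurj⟩
  have he_apply : ∀ x, e x = mApp B₀ x := fun x => rfl
  have hesymm : ∀ y, ‖e.symm y‖ ≤ σ⁻¹ * ‖y‖ := by
    intro y
    have h1 : σ * ‖e.symm y‖ ≤ ‖mApp B₀ (e.symm y)‖ := sigmaMin_le B₀ _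
    have h2 : mApp B₀ (e.symm y) = y := by
      rw [← he_apply, e.apply_symm_apply]
    rw [h2] at h1
    rw [inv_mul_eq_div, le_div_iff₀ hσ0]
    linarith
  -- the contraction map
  set V : EuclideanSpace ℝ (Fin n) → EuclideanSpace ℝ (Fin n) :=
    fun x => vabs (mApp B₁ x + b₁) with hV
  set f : EuclideanSpace ℝ (Fin n) → EuclideanSpace ℝ (Fin n) :=
    fun x => e.symm (-(b₀ + V x)) with hf
  set K : NNReal := ⟨specNorm B₁ * σ⁻¹, mul_nonneg (norm_nonneg _) (inv_nonneg.mpr hσ0.le)⟩ with hK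
  have hfix : ∀ x, Function.IsFixedPt f x ↔ mApp B₀ x + b₀ + V x = 0 := by
    intro x
    unfold Function.IsFixedPt
    rw [hf]
    simp only
    rw [LinearEquiv.symm_apply_eq, he_apply]
    constructor
    · intro h
      rw [← h]
      abel
    · intro h
      have : mApp B₀ x = -(b₀ + V x) := by
        linear_combination (norm := module) h
      exact this.symm
  have hVlip : ∀ x y, ‖V x - V y‖ ≤ specNorm B₁ * ‖x - y‖ := by
    intro x y
    calc ‖V x - V y‖ ≤ ‖(mApp B₁ x + b₁) - (mApp B₁ y + b₁)‖ := vabs_lip _ _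
      _ = ‖mApp B₁ (x - y)‖ := by
          congr 1
          unfold mApp
          rw [map_sub]
          abel
      _ ≤ specNorm B₁ * ‖x - y‖ := mApp_norm_le _ _
  have hC : ContractingWith K f := by
    constructor
    · rw [← NNReal.coe_lt_coe]
      show specNorm B₁ * σ⁻¹ < 1
      rw [← div_eq_mul_inv, div_lt_one hσ0]
      exact hσ
    · apply LipschitzWith.of_dist_le_mul
      intro x y
      rw [dist_eq_norm, dist_eq_norm]
      have h1 : f x - f y = e.symm (V y - V x) := by
        rw [hf]
        simp only
        rw [← map_sub]
        congr 1
        abel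
      rw [h1]
      calc ‖e.symm (V y - V x)‖ ≤ σ⁻¹ * ‖V y - V x‖ := hesymm _
        _ ≤ σ⁻¹ * (specNorm B₁ * ‖y - x‖) := by
            have := hVlip y x
            have h2 : (0:ℝ) ≤ σ⁻¹ := by positivity
            nlinarith
        _ = (K : ℝ) * ‖x - y‖ := by
            rw [norm_sub_rev]
            push_cast [hK]
            show _ = specNorm B₁ * σ⁻¹ * ‖x - y‖
            ring
  refine ⟨hC.fixedPoint f, (hfix _).mp hC.fixedPoint_isFixedPt, ?_⟩
  intro y hy
  exact hC.fixedPoint_unique ((hfix y).mpr hy)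
end

section
/- Let Ω ∈ ℝ^{n×n} be a positive diagonal matrix and A₀, A₁, A₂ ∈ ℝ^{n×n}, q₀, q₁, q₂ ∈ ℝⁿ. Then x ∈ ℝⁿ satisfies min{A₀x + q₀, A₁x + q₁, A₂x + q₂} = 0 (componentwise minimum) if and only if (2ΩA₀ + A₁ + A₂)x − |(A₁ − A₂)x + q₁ − q₂| − |(2ΩA₀ − A₁ − A₂)x + |(A₁ − A₂)x + q₁ − q₂| + 2Ωq₀ − q₁ − q₂| + 2Ωq₀ + q₁ + q₂ = 0. -/
lemma mApp_apply {n : ℕ} (B : Matrix (Fin n) (Fin n) ℝ) (x : EuclideanSpace ℝ (Fin n)) (i : Fin n) :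
    mApp B x i = B.mulVec (fun j => x j) i := by
  have := congrFun (Matrix.ofLp_toEuclideanCLM (𝕜 := ℝ) B x) i
  simpa [mApp, WithLp.equiv] using this

lemma key_scalar (ω a b c : ℝ) (hω : 0 < ω) :
    min a (min b c) = 0 ↔
      2 * ω * a + b + c - |b - c| - |2 * ω * a - b - c + (|b - c|)| = 0 := by
  have h1 : |b - c| = b + c - 2 * min b c := by
    rcases le_total b c with h | h
    · rw [abs_of_nonpos (by linarith), min_eq_left h]; ring
    · rw [abs_of_nonneg (by linarith), min_eq_right h]; ring
  rw [h1]
  set m := min b c with hm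
  have h2 : 2 * ω * a - b - c + (b + c - 2 * m) = 2 * ω * a - 2 * m := by ring
  rw [h2]
  have h3 : |2 * ω * a - 2 * m| = 2 * ω * a + 2 * m - 4 * min (ω * a) m := by
    rcases le_total (ω * a) m with h | h
    · rw [abs_of_nonpos (by linarith), min_eq_left h]; ring
    · rw [abs_of_nonneg (by linarith), min_eq_right h]; ring
  rw [h3]
  have equiv : min (ω * a) m = 0 ↔ min a m = 0 := by
    constructor <;> intro h
    · rcases min_eq_iff.mp h with ⟨h0, hle⟩ | ⟨h0, hle⟩
      · have ha0 : a = 0 := by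
          rcases mul_eq_zero.mp h0 with h' | h'
          · exact absurd h' hω.ne'
          · exact h'
        rw [ha0]; exact min_eq_left (by linarith [h0 ▸ hle])
      · rw [h0]
        refine min_eq_right ?_
        nlinarith [h0 ▸ hle]
    · rcases min_eq_iff.mp h with ⟨h0, hle⟩ | ⟨h0, hle⟩
      · rw [h0, mul_zero]
        exact min_eq_left (by linarith [h0 ▸ hle])
      · rw [h0]
        refine min_eq_right (mul_nonneg hω.le ?_)
        linarith [h0 ▸ hle]
  rw [← equiv]
  constructor <;> intro h <;> linarith

theorem stmt_12 {n : ℕ} (Ω A₀ A₁ A₂ : Matrix (Fin n) (Fin n) ℝ)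
    (hdiag : Ω.IsDiag) (hpos : ∀ i, 0 < Ω i i)
    (q₀ q₁ q₂ : EuclideanSpace ℝ (Fin n)) (x : EuclideanSpace ℝ (Fin n)) :
    (∀ i, min ((mApp A₀ x + q₀) i)
        (min ((mApp A₁ x + q₁) i) ((mApp A₂ x + q₂) i)) = 0) ↔
      mApp ((2 : ℝ) • (Ω * A₀) + A₁ + A₂) x
          - vabs (mApp (A₁ - A₂) x + (q₁ - q₂))
          - vabs (mApp ((2 : ℝ) • (Ω * A₀) - A₁ - A₂) x
              + vabs (mApp (A₁ - A₂) x + (q₁ - q₂))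
              + ((2 : ℝ) • mApp Ω q₀ - q₁ - q₂))
          + ((2 : ℝ) • mApp Ω q₀ + q₁ + q₂) = 0 := by
  have hΩ : ∀ (v : Fin n → ℝ) (i : Fin n),
      Ω.mulVec v i = Ω i i * v i := by
    intro v i
    unfold Matrix.mulVec dotProduct
    exact Finset.sum_eq_single i (fun j _ hj => by simp [show Ω i j = 0 from hdiag (Ne.symm hj)])
      (fun h => absurd (Finset.mem_univ i) h)
  constructor
  · intro h
    ext i
    have hi := h i
    simp only [PiLp.add_apply, PiLp.sub_apply, PiLp.smul_apply, vabs, mApp_apply,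
      Matrix.add_mulVec, Matrix.sub_mulVec, Matrix.smul_mulVec,
      ← Matrix.mulVec_mulVec, hΩ, Pi.add_apply, Pi.sub_apply, Pi.smul_apply,
      smul_eq_mul, PiLp.zero_apply, PiLp.toLp_apply] at *
    have hk := (key_scalar (Ω i i) (A₀.mulVec (fun j => x j) i + q₀ i)
      (A₁.mulVec (fun j => x j) i + q₁ i) (A₂.mulVec (fun j => x j) i + q₂ i) (hpos i)).mp hi
    ring_nf at hk ⊢
    linarith [hk]
  · intro h i
    have hi := congrArg (fun v => v i) h
    simp only [PiLp.add_apply, PiLp.sub_apply, PiLp.smul_apply, vabs, mApp_apply,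
      Matrix.add_mulVec, Matrix.sub_mulVec, Matrix.smul_mulVec,
      ← Matrix.mulVec_mulVec, hΩ, Pi.add_apply, Pi.sub_apply, Pi.smul_apply,
      smul_eq_mul, PiLp.zero_apply, PiLp.toLp_apply] at *
    refine (key_scalar (Ω i i) (A₀.mulVec (fun j => x j) i + q₀ i)
      (A₁.mulVec (fun j => x j) i + q₁ i) (A₂.mulVec (fun j => x j) i + q₂ i) (hpos i)).mpr ?_
    ring_nf at hi ⊢
    linarith [hi]
end

section
/- Let g : ℝⁿ → ℝⁿ be continuous with unique zero x*, and suppose V(x) = ½‖x − x*‖² satisfies dV(x(t))/dt ≤ −c₁ V(x(t))^{κ₁} − c₂ V(x(t))^{κ₂} along every solution x(t) of dx/dt = −ρ(x)g(x), where c₁, c₂ > 0, 0 < κ₁ < 1 < κ₂. Then every solution reaches x* in time at most T_max = 1/(c₁(1−κ₁)) + 1/(c₂(κ₂−1)), independently of the initial condition. -/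
theorem stmt_15 {n : ℕ} (g : EuclideanSpace ℝ (Fin n) → EuclideanSpace ℝ (Fin n))
    (hg : Continuous g) (xs : EuclideanSpace ℝ (Fin n))
    (hzero : ∀ x, g x = 0 ↔ x = xs)
    (ρ : EuclideanSpace ℝ (Fin n) → ℝ)
    (c₁ c₂ κ₁ κ₂ : ℝ) (hc₁ : 0 < c₁) (hc₂ : 0 < c₂)
    (hκ₁ : 0 < κ₁) (hκ₁' : κ₁ < 1) (hκ₂ : 1 < κ₂)
    (x : ℝ → EuclideanSpace ℝ (Fin n))
    (hode : ∀ t : ℝ, 0 ≤ t → HasDerivAt x (-(ρ (x t)) • g (x t)) t)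
    (hV : ∀ t : ℝ, 0 ≤ t →
      deriv (fun s => (1 / 2) * ‖x s - xs‖ ^ 2) t ≤
        -c₁ * ((1 / 2) * ‖x t - xs‖ ^ 2) ^ κ₁
          - c₂ * ((1 / 2) * ‖x t - xs‖ ^ 2) ^ κ₂) :
    ∀ t : ℝ, 1 / (c₁ * (1 - κ₁)) + 1 / (c₂ * (κ₂ - 1)) ≤ t → x t = xs := by
  set v : ℝ → ℝ := fun s => (1 / 2) * ‖x s - xs‖ ^ 2 with hv_def
  have hvnn : ∀ t : ℝ, 0 ≤ v t := fun t => by positivity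
  have hdiff : ∀ t : ℝ, 0 ≤ t → DifferentiableAt ℝ v t := by
    intro t ht
    have h1 : DifferentiableAt ℝ (fun s => x s - xs) t :=
      ((hode t ht).differentiableAt).sub_const xs
    exact (h1.norm_sq (𝕜 := ℝ)).const_mul _
  have hdv : ∀ t : ℝ, 0 ≤ t → HasDerivAt v (deriv v t) t :=
    fun t ht => (hdiff t ht).hasDerivAt
  have hV' : ∀ t : ℝ, 0 ≤ t → deriv v t ≤ -c₁ * v t ^ κ₁ - c₂ * v t ^ κ₂ :=
    fun t ht => hV t ht
  have hderiv_nonpos : ∀ t : ℝ, 0 ≤ t → deriv v t ≤ 0 := by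
    intro t ht
    refine (hV' t ht).trans ?_
    have h1 : 0 ≤ v t ^ κ₁ := Real.rpow_nonneg (hvnn t) _
    have h2 : 0 ≤ v t ^ κ₂ := Real.rpow_nonneg (hvnn t) _
    nlinarith
  have hanti : AntitoneOn v (Set.Ici (0:ℝ)) := by
    apply antitoneOn_of_deriv_nonpos (convex_Ici 0)
    · exact fun t ht => (hdiff t ht).continuousAt.continuousWithinAt
    · intro t ht
      rw [interior_Ici] at ht
      exact (hdiff t (le_of_lt ht)).differentiableWithinAt
    · intro t ht
      rw [interior_Ici] at ht
      exact hderiv_nonpos t ht.le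
  set T₁ : ℝ := 1 / (c₂ * (κ₂ - 1)) with hT₁_def
  set T₂ : ℝ := 1 / (c₁ * (1 - κ₁)) with hT₂_def
  have hT₁ : 0 < T₁ := by
    apply one_div_pos.2
    apply mul_pos hc₂; linarith
  have hT₂ : 0 < T₂ := by
    apply one_div_pos.2
    apply mul_pos hc₁; linarith
  -- Phase 1: v T₁ ≤ 1
  have hv1 : v T₁ ≤ 1 := by
    by_contra h
    push_neg at h
    have hvgt : ∀ t : ℝ, 0 ≤ t → t ≤ T₁ → 1 < v t := fun t ht ht' =>
      lt_of_lt_of_le h (hanti ht hT₁.le ht')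
    set w : ℝ → ℝ := fun t => v t ^ (1 - κ₂) - (κ₂ - 1) * c₂ * t with hw_def
    have hw : MonotoneOn w (Set.Icc 0 T₁) := by
      apply monotoneOn_of_deriv_nonneg (convex_Icc 0 T₁)
      · apply ContinuousOn.sub
        · intro t ht
          exact (((hdv t ht.1).rpow_const (Or.inl (by nlinarith [hvgt t ht.1 ht.2]))).differentiableAt).continuousAt.continuousWithinAt
        · exact (continuous_const.mul continuous_id).continuousOn
      · intro t ht
        rw [interior_Icc] at ht
        exact (((hdv t ht.1.le).rpow_const (Or.inl (by nlinarith [hvgt t ht.1.le ht.2.le]))).sub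
          ((hasDerivAt_id t).const_mul ((κ₂ - 1) * c₂))).differentiableAt.differentiableWithinAt
      · intro t ht
        rw [interior_Icc] at ht
        have ht0 : (0:ℝ) ≤ t := ht.1.le
        have ha : 1 < v t := hvgt t ht0 ht.2.le
        have ha0 : 0 < v t := by linarith
        have hder : HasDerivAt w (deriv v t * (1 - κ₂) * v t ^ (1 - κ₂ - 1) - (κ₂ - 1) * c₂ * 1) t :=
          ((hdv t ht0).rpow_const (Or.inl ha0.ne')).sub ((hasDerivAt_id t).const_mul ((κ₂ - 1) * c₂))
        rw [hder.deriv]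
        have hexp : 1 - κ₂ - 1 = -κ₂ := by ring
        rw [hexp]
        have hmul : v t ^ κ₂ * v t ^ (-κ₂) = 1 := by
          rw [← Real.rpow_add ha0]; simp
        have hr : 0 < v t ^ (-κ₂) := Real.rpow_pos_of_pos ha0 _
        have hq : 0 ≤ v t ^ κ₁ := Real.rpow_nonneg (hvnn t) _
        have hd := hV' t ht0
        have h1 : deriv v t * v t ^ (-κ₂) ≤ -c₂ := by
          have h3 := mul_le_mul_of_nonneg_right hd hr.le
          have h4 : 0 ≤ c₁ * (v t ^ κ₁ * v t ^ (-κ₂)) :=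
            mul_nonneg hc₁.le (mul_nonneg hq hr.le)
          calc deriv v t * v t ^ (-κ₂)
              ≤ (-c₁ * v t ^ κ₁ - c₂ * v t ^ κ₂) * v t ^ (-κ₂) := h3
            _ = -(c₁ * (v t ^ κ₁ * v t ^ (-κ₂))) - c₂ * (v t ^ κ₂ * v t ^ (-κ₂)) := by ring
            _ ≤ -(c₂ * (v t ^ κ₂ * v t ^ (-κ₂))) := by linarith
            _ = -c₂ := by rw [hmul]; ring
        have h2 : (κ₂ - 1) * c₂ ≤ deriv v t * (1 - κ₂) * v t ^ (-κ₂) := by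
          have h5 := mul_le_mul_of_nonpos_left h1 (show 1 - κ₂ ≤ 0 by linarith)
          calc (κ₂ - 1) * c₂ = (1 - κ₂) * (-c₂) := by ring
            _ ≤ (1 - κ₂) * (deriv v t * v t ^ (-κ₂)) := h5
            _ = deriv v t * (1 - κ₂) * v t ^ (-κ₂) := by ring
        linarith
    have hmem0 : (0:ℝ) ∈ Set.Icc (0:ℝ) T₁ := ⟨le_refl 0, hT₁.le⟩
    have hmemT : T₁ ∈ Set.Icc (0:ℝ) T₁ := ⟨hT₁.le, le_refl T₁⟩
    have hle := hw hmem0 hmemT hT₁.le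
    have hne : c₂ * (κ₂ - 1) ≠ 0 := by
      apply ne_of_gt; apply mul_pos hc₂; linarith
    have hone : (κ₂ - 1) * c₂ * T₁ = 1 := by
      rw [hT₁_def, mul_one_div, show (κ₂ - 1) * c₂ = c₂ * (κ₂ - 1) from by ring,
        div_self hne]
    have h0pos : 0 < v 0 ^ (1 - κ₂) :=
      Real.rpow_pos_of_pos (by nlinarith [hvgt 0 le_rfl hT₁.le]) _
    have hTlt : v T₁ ^ (1 - κ₂) < 1 :=
      Real.rpow_lt_one_of_one_lt_of_neg h (by linarith)
    simp only [hw_def] at hle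
    rw [hone, mul_zero, sub_zero] at hle
    linarith
  -- Phase 2: v T = 0, where T = T₂ + T₁
  set T : ℝ := T₂ + T₁ with hT_def
  have hT0 : 0 < T := by linarith
  have hvT : v T = 0 := by
    by_contra h
    have hvTpos : 0 < v T := (hvnn T).lt_of_ne (Ne.symm h)
    have hvpos : ∀ t : ℝ, T₁ ≤ t → t ≤ T → 0 < v t := fun t ht ht' =>
      lt_of_lt_of_le hvTpos (hanti (by linarith : (0:ℝ) ≤ t) hT0.le ht')
    set u : ℝ → ℝ := fun t => v t ^ (1 - κ₁) + (1 - κ₁) * c₁ * t with hu_def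
    have hu : AntitoneOn u (Set.Icc T₁ T) := by
      apply antitoneOn_of_deriv_nonpos (convex_Icc T₁ T)
      · apply ContinuousOn.add
        · intro t ht
          exact (((hdv t (by linarith [ht.1])).rpow_const
            (Or.inl (hvpos t ht.1 ht.2).ne')).differentiableAt).continuousAt.continuousWithinAt
        · exact (continuous_const.mul continuous_id).continuousOn
      · intro t ht
        rw [interior_Icc] at ht
        exact (((hdv t (by linarith [ht.1])).rpow_const (Or.inl (hvpos t ht.1.le ht.2.le).ne')).add
          ((hasDerivAt_id t).const_mul ((1 - κ₁) * c₁))).differentiableAt.differentiableWithinAt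
      · intro t ht
        rw [interior_Icc] at ht
        have ht0 : (0:ℝ) ≤ t := by linarith [ht.1]
        have ha0 : 0 < v t := hvpos t ht.1.le ht.2.le
        have hder : HasDerivAt u (deriv v t * (1 - κ₁) * v t ^ (1 - κ₁ - 1) + (1 - κ₁) * c₁ * 1) t :=
          ((hdv t ht0).rpow_const (Or.inl ha0.ne')).add ((hasDerivAt_id t).const_mul ((1 - κ₁) * c₁))
        rw [hder.deriv]
        have hexp : 1 - κ₁ - 1 = -κ₁ := by ring
        rw [hexp]
        have hmul : v t ^ κ₁ * v t ^ (-κ₁) = 1 := by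
          rw [← Real.rpow_add ha0]; simp
        have hr : 0 < v t ^ (-κ₁) := Real.rpow_pos_of_pos ha0 _
        have hq : 0 ≤ v t ^ κ₂ := Real.rpow_nonneg (hvnn t) _
        have hd := hV' t ht0
        have h1 : deriv v t * v t ^ (-κ₁) ≤ -c₁ := by
          have h3 := mul_le_mul_of_nonneg_right hd hr.le
          have h4 : 0 ≤ c₂ * (v t ^ κ₂ * v t ^ (-κ₁)) :=
            mul_nonneg hc₂.le (mul_nonneg hq hr.le)
          calc deriv v t * v t ^ (-κ₁)
              ≤ (-c₁ * v t ^ κ₁ - c₂ * v t ^ κ₂) * v t ^ (-κ₁) := h3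
            _ = -(c₁ * (v t ^ κ₁ * v t ^ (-κ₁))) - c₂ * (v t ^ κ₂ * v t ^ (-κ₁)) := by ring
            _ ≤ -(c₁ * (v t ^ κ₁ * v t ^ (-κ₁))) := by linarith
            _ = -c₁ := by rw [hmul]; ring
        have h2 : deriv v t * (1 - κ₁) * v t ^ (-κ₁) ≤ (1 - κ₁) * (-c₁) := by
          have h5 := mul_le_mul_of_nonneg_left h1 (show (0:ℝ) ≤ 1 - κ₁ by linarith)
          calc deriv v t * (1 - κ₁) * v t ^ (-κ₁)
              = (1 - κ₁) * (deriv v t * v t ^ (-κ₁)) := by ring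
            _ ≤ (1 - κ₁) * (-c₁) := h5
        linarith
    have hmem1 : T₁ ∈ Set.Icc T₁ T := ⟨le_refl T₁, by linarith⟩
    have hmemT : T ∈ Set.Icc T₁ T := ⟨by linarith, le_refl T⟩
    have hle := hu hmem1 hmemT (by linarith)
    have hne : c₁ * (1 - κ₁) ≠ 0 := by
      apply ne_of_gt; apply mul_pos hc₁; linarith
    have hone : (1 - κ₁) * c₁ * T₂ = 1 := by
      rw [hT₂_def, mul_one_div, show (1 - κ₁) * c₁ = c₁ * (1 - κ₁) from by ring,
        div_self hne]
    have hTpos : 0 < v T ^ (1 - κ₁) := Real.rpow_pos_of_pos hvTpos _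
    have hTle : v T₁ ^ (1 - κ₁) ≤ 1 :=
      Real.rpow_le_one (hvnn T₁) hv1 (by linarith)
    have hsplit : (1 - κ₁) * c₁ * T = 1 + (1 - κ₁) * c₁ * T₁ := by
      rw [hT_def]; linear_combination hone
    simp only [hu_def] at hle
    rw [hsplit] at hle
    linarith
  intro t ht
  have hvt : v t = 0 := le_antisymm (by
    calc v t ≤ v T := hanti (Set.mem_Ici.2 hT0.le) (Set.mem_Ici.2 (by linarith)) ht
    _ = 0 := hvT) (hvnn t)
  have hnorm : ‖x t - xs‖ ^ 2 = 0 := by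
    simp only [hv_def] at hvt
    linarith [hvt]
  have : x t - xs = 0 := by
    rw [pow_eq_zero_iff (by norm_num : 2 ≠ 0)] at hnorm
    exact norm_eq_zero.1 hnorm
  exact sub_eq_zero.1 this
end

section
/- Scalar settling-time bound: let v : [0, ∞) → ℝ be nonnegative, differentiable, with v′(t) ≤ −c₁ v(t)^{κ₁} whenever v(t) ≤ 1 and v′(t) ≤ −c₂ v(t)^{κ₂} whenever v(t) ≥ 1, where c₁, c₂ > 0, 0 < κ₁ < 1 < κ₂. Then v(t) = 0 for all t ≥ 1/(c₁(1−κ₁)) + 1/(c₂(κ₂−1)). -/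
theorem stmt_16 (v : ℝ → ℝ) (c₁ c₂ κ₁ κ₂ : ℝ)
    (hc₁ : 0 < c₁) (hc₂ : 0 < c₂) (hκ₁ : 0 < κ₁) (hκ₁' : κ₁ < 1) (hκ₂ : 1 < κ₂)
    (hnn : ∀ t : ℝ, 0 ≤ t → 0 ≤ v t)
    (hdiff : ∀ t : ℝ, 0 ≤ t → DifferentiableAt ℝ v t)
    (h₁ : ∀ t : ℝ, 0 ≤ t → v t ≤ 1 → deriv v t ≤ -c₁ * v t ^ κ₁)
    (h₂ : ∀ t : ℝ, 0 ≤ t → 1 ≤ v t → deriv v t ≤ -c₂ * v t ^ κ₂) :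
    ∀ t : ℝ, 1 / (c₁ * (1 - κ₁)) + 1 / (c₂ * (κ₂ - 1)) ≤ t → v t = 0 := by
  set T₁ : ℝ := 1 / (c₁ * (1 - κ₁)) with hT₁def
  set T₂ : ℝ := 1 / (c₂ * (κ₂ - 1)) with hT₂def
  have hd₁ : 0 < c₁ * (1 - κ₁) := by nlinarith
  have hd₂ : 0 < c₂ * (κ₂ - 1) := by nlinarith
  have hT₁ : 0 < T₁ := by positivity
  have hT₂ : 0 < T₂ := by positivity
  set T : ℝ := T₁ + T₂ with hTdef
  have hT : 0 < T := by positivity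
  -- v is antitone on [0, ∞)
  have hanti : AntitoneOn v (Set.Ici 0) := by
    apply antitoneOn_of_deriv_nonpos (convex_Ici 0)
    · exact fun t ht => (hdiff t ht).continuousAt.continuousWithinAt
    · intro t ht
      rw [interior_Ici] at ht
      exact ((hdiff t ht.le).differentiableWithinAt)
    · intro t ht
      rw [interior_Ici] at ht
      rcases le_total (v t) 1 with h | h
      · have := h₁ t ht.le h
        have h0 : (0:ℝ) ≤ v t ^ κ₁ := Real.rpow_nonneg (hnn t ht.le) _
        nlinarith
      · have := h₂ t ht.le h
        have h0 : (0:ℝ) ≤ v t ^ κ₂ := Real.rpow_nonneg (hnn t ht.le) _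
        nlinarith
  -- Phase 2: v T₂ ≤ 1
  have hvT₂ : v T₂ ≤ 1 := by
    by_contra hgt
    push_neg at hgt
    have hv1 : ∀ s ∈ Set.Icc (0:ℝ) T₂, 1 < v s := by
      intro s hs
      exact lt_of_lt_of_le hgt (hanti (Set.mem_Ici.mpr hs.1) (Set.mem_Ici.mpr hT₂.le) hs.2)
    -- g := v^(1-κ₂) - c₂(κ₂-1) t is monotone on [0,T₂]
    have hmono : MonotoneOn (fun t => v t ^ (1 - κ₂) - c₂ * (κ₂ - 1) * t)
        (Set.Icc (0:ℝ) T₂) := by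
      have hderiv : ∀ t ∈ Set.Icc (0:ℝ) T₂,
          HasDerivAt (fun t => v t ^ (1 - κ₂) - c₂ * (κ₂ - 1) * t)
            (deriv v t * (1 - κ₂) * v t ^ (1 - κ₂ - 1) - c₂ * (κ₂ - 1)) t := by
        intro t ht
        have h1 : HasDerivAt (fun t => v t ^ (1 - κ₂))
            (deriv v t * (1 - κ₂) * v t ^ (1 - κ₂ - 1)) t :=
          (hdiff t ht.1).hasDerivAt.rpow_const (Or.inl (by linarith [hv1 t ht]))
        have h := h1.sub ((hasDerivAt_id t).const_mul (c₂ * (κ₂ - 1)))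
        simp only [mul_one] at h
        exact h
      apply monotoneOn_of_deriv_nonneg (convex_Icc 0 T₂)
      · exact fun t ht => (hderiv t ht).continuousAt.continuousWithinAt
      · intro t ht
        exact (hderiv t (interior_subset ht)).differentiableAt.differentiableWithinAt
      · intro t ht
        rw [interior_Icc] at ht
        have ht' : t ∈ Set.Icc (0:ℝ) T₂ := ⟨ht.1.le, ht.2.le⟩
        rw [(hderiv t ht').deriv]
        have hv : 1 < v t := hv1 t ht'
        have hvp : 0 < v t := by linarith
        have hdv : deriv v t ≤ -c₂ * v t ^ κ₂ := h₂ t ht.1.le hv.le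
        have hab : v t ^ (1 - κ₂ - 1) * v t ^ κ₂ = 1 := by
          rw [← Real.rpow_add hvp]
          norm_num
        have ha : 0 < v t ^ (1 - κ₂ - 1) := Real.rpow_pos_of_pos hvp _
        have hb : 0 < v t ^ κ₂ := Real.rpow_pos_of_pos hvp _
        nlinarith [mul_le_mul_of_nonneg_left hdv ha.le]
    have hg := hmono (Set.left_mem_Icc.mpr hT₂.le) (Set.right_mem_Icc.mpr hT₂.le) hT₂.le
    simp only [mul_zero, sub_zero] at hg
    have hTval : c₂ * (κ₂ - 1) * T₂ = 1 := by
      rw [hT₂def, mul_one_div_cancel hd₂.ne']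
    have hw0 : 0 < v 0 ^ (1 - κ₂) :=
      Real.rpow_pos_of_pos (by linarith [hv1 0 (Set.left_mem_Icc.mpr hT₂.le)]) _
    have hwT : v T₂ ^ (1 - κ₂) ≤ 1 :=
      Real.rpow_le_one_of_one_le_of_nonpos hgt.le (by linarith)
    rw [hTval] at hg
    linarith
  -- Phase 1: v T = 0
  have hvT : v T = 0 := by
    by_contra hne
    have hvTpos : 0 < v T := lt_of_le_of_ne (hnn T hT.le) (Ne.symm hne)
    have hvpos : ∀ s ∈ Set.Icc T₂ T, 0 < v s := fun s hs =>
      lt_of_lt_of_le hvTpos (hanti (Set.mem_Ici.mpr (hT₂.le.trans hs.1))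
        (Set.mem_Ici.mpr hT.le) hs.2)
    have hvle : ∀ s ∈ Set.Icc T₂ T, v s ≤ 1 := fun s hs =>
      le_trans (hanti (Set.mem_Ici.mpr hT₂.le) (Set.mem_Ici.mpr (hT₂.le.trans hs.1)) hs.1) hvT₂
    have hantig : AntitoneOn (fun t => v t ^ (1 - κ₁) + c₁ * (1 - κ₁) * t)
        (Set.Icc T₂ T) := by
      have hderiv : ∀ t ∈ Set.Icc T₂ T,
          HasDerivAt (fun t => v t ^ (1 - κ₁) + c₁ * (1 - κ₁) * t)
            (deriv v t * (1 - κ₁) * v t ^ (1 - κ₁ - 1) + c₁ * (1 - κ₁)) t := by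
        intro t ht
        have h1 : HasDerivAt (fun t => v t ^ (1 - κ₁))
            (deriv v t * (1 - κ₁) * v t ^ (1 - κ₁ - 1)) t :=
          (hdiff t (hT₂.le.trans ht.1)).hasDerivAt.rpow_const
            (Or.inl (ne_of_gt (hvpos t ht)))
        have h := h1.add ((hasDerivAt_id t).const_mul (c₁ * (1 - κ₁)))
        simp only [mul_one] at h
        exact h
      apply antitoneOn_of_deriv_nonpos (convex_Icc T₂ T)
      · exact fun t ht => (hderiv t ht).continuousAt.continuousWithinAt
      · intro t ht
        exact (hderiv t (interior_subset ht)).differentiableAt.differentiableWithinAt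
      · intro t ht
        rw [interior_Icc] at ht
        have ht' : t ∈ Set.Icc T₂ T := ⟨ht.1.le, ht.2.le⟩
        rw [(hderiv t ht').deriv]
        have hvp : 0 < v t := hvpos t ht'
        have hdv : deriv v t ≤ -c₁ * v t ^ κ₁ :=
          h₁ t (hT₂.le.trans ht'.1) (hvle t ht')
        have hab : v t ^ (1 - κ₁ - 1) * v t ^ κ₁ = 1 := by
          rw [← Real.rpow_add hvp]
          norm_num
        have ha : 0 < v t ^ (1 - κ₁ - 1) := Real.rpow_pos_of_pos hvp _
        have hb : 0 < v t ^ κ₁ := Real.rpow_pos_of_pos hvp _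
        nlinarith [mul_le_mul_of_nonneg_left hdv ha.le]
    have hle : T₂ ≤ T := by linarith
    have hg := hantig (Set.left_mem_Icc.mpr hle) (Set.right_mem_Icc.mpr hle) hle
    have hT₁val : c₁ * (1 - κ₁) * T₁ = 1 := by
      rw [hT₁def, mul_one_div_cancel hd₁.ne']
    have huT₂ : v T₂ ^ (1 - κ₁) ≤ 1 :=
      Real.rpow_le_one (hnn T₂ hT₂.le) hvT₂ (by linarith)
    have huT : 0 < v T ^ (1 - κ₁) := Real.rpow_pos_of_pos hvTpos _
    have hsum : c₁ * (1 - κ₁) * T = c₁ * (1 - κ₁) * T₂ + 1 := by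
      rw [hTdef, mul_add, hT₁val]; ring
    simp only at hg
    linarith
  intro t ht
  have h1 : v t ≤ v T := hanti (Set.mem_Ici.mpr hT.le)
    (Set.mem_Ici.mpr (hT.le.trans ht)) ht
  have h2 : 0 ≤ v t := hnn t (hT.le.trans ht)
  linarith [hvT ▸ h1]
end
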